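/- If C : 2^M → ℝ≥0 is a monotone normalized subadditive cost function, then for every allocation S, the potential function satisfies P_C(S) ≥ C(S)/2. -/

import Mathlib

open Finset

variable {α : Type*}

noncomputable def potential [DecidableEq α] (n : ℕ)
    (C : Finset α → ℝ) (S : Fin n → Finset α) : ℝ :=
  ∑ I ∈ (univ : Finset (Fin n)).powerset.filter (· ≠ ∅),
    C (I.biUnion S) / ((I.card : ℝ) * (n.choose I.card : ℝ))

theorem stmt6 [DecidableEq α] (n : ℕ) (M : Fin n → Finset α)
    (hM : ∀ i j : Fin n, i ≠ j → Disjoint (M i) (M j))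
    (C : Finset α → ℝ) (hC0 : C ∅ = 0) (hCnn : ∀ S, 0 ≤ C S)
    (hmono : ∀ S T : Finset α, S ⊆ T → C S ≤ C T)
    (hsubadd : ∀ S T : Finset α, C (S ∪ T) ≤ C S + C T)
    (S : Fin n → Finset α) (hS : ∀ i, S i ⊆ M i) :
    C (univ.biUnion S) / 2 ≤ potential n C S := by
  classical
  set B := C (univ.biUnion S) with hB
  have hB0 : 0 ≤ B := hCnn _
  set f : Finset (Fin n) → ℝ :=
    fun I => C (I.biUnion S) / ((I.card : ℝ) * (n.choose I.card : ℝ)) with hf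
  have hfnn : ∀ I, 0 ≤ f I := by
    intro I
    apply div_nonneg (hCnn _)
    positivity
  -- n = 0 case
  rcases Nat.eq_zero_or_pos n with hn0 | hn0
  · subst hn0
    have h1 : (univ : Finset (Fin 0)) = ∅ := rfl
    have hB' : B = 0 := by rw [hB, h1]; simpa using hC0
    rw [potential, hB']
    have h2 : ((univ : Finset (Fin 0)).powerset.filter (· ≠ ∅)) = ∅ := by
      rw [h1]; decide
    rw [h2]
    simp
  have huniv_ne : (univ : Finset (Fin n)) ≠ ∅ := by
    have : 0 < (univ : Finset (Fin n)).card := by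
      rw [card_univ, Fintype.card_fin]; exact hn0
    exact (Finset.card_pos.1 this).ne_empty
  have huniv_mem : (univ : Finset (Fin n)) ∈
      (univ : Finset (Fin n)).powerset.filter (· ≠ ∅) :=
    mem_filter.2 ⟨mem_powerset.2 (subset_univ _), huniv_ne⟩
  have hPsplit : potential n C S = f univ +
      ∑ I ∈ ((univ : Finset (Fin n)).powerset.filter (· ≠ ∅)).erase univ, f I := by
    rw [potential, ← Finset.add_sum_erase _ f huniv_mem]
  have hfuniv : f univ = B / n := by
    simp [hf, hB, card_univ, Fintype.card_fin, Nat.choose_self]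
  set A := ((univ : Finset (Fin n)).powerset.filter (· ≠ ∅)).erase univ with hA
  have hmemA : ∀ I : Finset (Fin n), I ∈ A ↔ I ≠ univ ∧ I ≠ ∅ := by
    intro I
    simp [hA, mem_erase, mem_filter, and_comm]
  -- n = 1 case
  rcases eq_or_lt_of_le (Nat.succ_le_of_lt hn0) with hn1 | hn2
  · have hAe : A = ∅ := by
      rw [eq_empty_iff_forall_notMem]
      intro I hI
      rw [hmemA] at hI
      apply hI.1
      apply Finset.eq_univ_of_card
      have h1 : 1 ≤ I.card := card_pos.2 (nonempty_iff_ne_empty.2 hI.2)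
      have h2 : I.card ≤ Fintype.card (Fin n) := card_le_univ I
      rw [Fintype.card_fin] at h2 ⊢
      omega
    have hnR : (n : ℝ) = 1 := by exact_mod_cast hn1.symm
    rw [hPsplit, hAe, hfuniv, hnR]
    simp
    linarith
  -- main case n ≥ 2
  have hn2' : 2 ≤ n := hn2
  have hn1R : (1 : ℝ) ≤ (n : ℝ) - 1 := by
    have : (2 : ℝ) ≤ (n : ℝ) := by exact_mod_cast hn2'
    linarith
  -- complement maps A to A
  have hcomplA : ∀ I ∈ A, Iᶜ ∈ A := by
    intro I hI
    rw [hmemA] at hI ⊢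
    constructor
    · simpa [Finset.compl_eq_univ_iff] using hI.2
    · simpa [Finset.compl_eq_empty_iff] using hI.1
  have hcomplsum : ∑ I ∈ A, f Iᶜ = ∑ I ∈ A, f I := by
    apply Finset.sum_nbij' (fun I => Iᶜ) (fun I => Iᶜ)
    · exact hcomplA
    · exact hcomplA
    · intro I _; exact compl_compl I
    · intro I _; exact compl_compl I
    · intro I _; rfl
  -- pointwise bound
  have hpoint : ∀ I ∈ A, B / (((n : ℝ) - 1) * (n.choose I.card : ℝ)) ≤ f I + f Iᶜ := by
    intro I hI
    rw [hmemA] at hI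
    have hk1 : 1 ≤ I.card := card_pos.2 (nonempty_iff_ne_empty.2 hI.2)
    have hkn : I.card < n := by
      have h2 : I.card ≤ Fintype.card (Fin n) := card_le_univ I
      rw [Fintype.card_fin] at h2
      rcases eq_or_lt_of_le h2 with h | h
      · exact absurd (Finset.eq_univ_of_card I (by rw [Fintype.card_fin]; exact h)) hI.1
      · exact h
    have hcardc : Iᶜ.card = n - I.card := by
      rw [Finset.card_compl, Fintype.card_fin]
    have hchoosec : n.choose Iᶜ.card = n.choose I.card := by
      rw [hcardc, Nat.choose_symm (le_of_lt hkn)]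
    have hcpos : (0 : ℝ) < (n.choose I.card : ℝ) := by
      exact_mod_cast Nat.choose_pos (le_of_lt hkn)
    have hDpos : (0 : ℝ) < ((n : ℝ) - 1) * (n.choose I.card : ℝ) := by
      apply mul_pos _ hcpos
      linarith
    have hsub : B ≤ C (I.biUnion S) + C (Iᶜ.biUnion S) := by
      have h : (univ : Finset (Fin n)).biUnion S = I.biUnion S ∪ Iᶜ.biUnion S := by
        ext a
        simp only [Finset.mem_biUnion, Finset.mem_union, Finset.mem_compl, Finset.mem_univ,
          true_and]
        constructor
        · rintro ⟨i, hi⟩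
          by_cases h : i ∈ I
          · exact Or.inl ⟨i, h, hi⟩
          · exact Or.inr ⟨i, h, hi⟩
        · rintro (⟨i, _, hi⟩ | ⟨i, _, hi⟩) <;> exact ⟨i, hi⟩
      rw [hB, h]
      exact hsubadd _ _
    have hcastd : ∀ m : ℕ, 1 ≤ m → m ≤ n - 1 → (m : ℝ) ≤ (n : ℝ) - 1 := by
      intro m _ hm
      have : m + 1 ≤ n := by omega
      have h2 : ((m : ℝ) + 1) ≤ (n : ℝ) := by exact_mod_cast this
      linarith
    have hd1 : (I.card : ℝ) * (n.choose I.card : ℝ) ≤ ((n : ℝ) - 1) * (n.choose I.card : ℝ) :=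
      mul_le_mul_of_nonneg_right (hcastd I.card hk1 (by omega)) (le_of_lt hcpos)
    have hd2 : (Iᶜ.card : ℝ) * (n.choose Iᶜ.card : ℝ) ≤ ((n : ℝ) - 1) * (n.choose I.card : ℝ) := by
      rw [hchoosec]
      exact mul_le_mul_of_nonneg_right (hcastd Iᶜ.card (by omega) (by omega)) (le_of_lt hcpos)
    have hd1pos : (0 : ℝ) < (I.card : ℝ) * (n.choose I.card : ℝ) := by
      apply mul_pos _ hcpos
      exact_mod_cast hk1
    have hd2pos : (0 : ℝ) < (Iᶜ.card : ℝ) * (n.choose Iᶜ.card : ℝ) := by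
      rw [hchoosec]
      apply mul_pos _ hcpos
      have : 1 ≤ Iᶜ.card := by omega
      exact_mod_cast this
    calc B / (((n : ℝ) - 1) * (n.choose I.card : ℝ))
        ≤ (C (I.biUnion S) + C (Iᶜ.biUnion S)) / (((n : ℝ) - 1) * (n.choose I.card : ℝ)) := by
          gcongr
      _ = C (I.biUnion S) / (((n : ℝ) - 1) * (n.choose I.card : ℝ))
          + C (Iᶜ.biUnion S) / (((n : ℝ) - 1) * (n.choose I.card : ℝ)) := add_div _ _ _
      _ ≤ f I + f Iᶜ := by
          apply add_le_add
          · exact div_le_div_of_nonneg_left (hCnn _) hd1pos hd1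
          · exact div_le_div_of_nonneg_left (hCnn _) hd2pos hd2
  -- sum of the lower bounds over A equals B
  have hsumA : ∑ I ∈ A, B / (((n : ℝ) - 1) * (n.choose I.card : ℝ)) = B := by
    have hp : ∀ I : Finset (Fin n), I ∈ (univ : Finset (Fin n)).powerset := fun I =>
      mem_powerset.2 (subset_univ I)
    have hAeq : A = (((univ : Finset (Fin n)).powerset).erase ∅).erase univ := by
      rw [hA, Finset.filter_ne']
    have huniv_mem' : (univ : Finset (Fin n)) ∈ ((univ : Finset (Fin n)).powerset).erase ∅ :=
      mem_erase.2 ⟨huniv_ne, hp _⟩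
    set g : ℕ → ℝ := fun k => B / (((n : ℝ) - 1) * (n.choose k : ℝ)) with hg
    have hpow : ∑ I ∈ (univ : Finset (Fin n)).powerset, g I.card
        = ((n : ℝ) + 1) * (B / ((n : ℝ) - 1)) := by
      rw [Finset.sum_powerset_apply_card g, card_univ, Fintype.card_fin]
      have : ∀ k ∈ range (n + 1), n.choose k • g k = B / ((n : ℝ) - 1) := by
        intro k hk
        rw [mem_range, Nat.lt_succ_iff] at hk
        have hck : (0 : ℝ) < (n.choose k : ℝ) := by exact_mod_cast Nat.choose_pos hk
        rw [hg, nsmul_eq_mul]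
        field_simp
      rw [Finset.sum_congr rfl this, Finset.sum_const, card_range, nsmul_eq_mul]
      push_cast
      ring
    have h1 : ∑ I ∈ A, g I.card
        = ∑ I ∈ ((univ : Finset (Fin n)).powerset).erase ∅, g I.card - g (univ : Finset (Fin n)).card := by
      rw [hAeq, Finset.sum_erase_eq_sub huniv_mem']
    have h2 : ∑ I ∈ ((univ : Finset (Fin n)).powerset).erase ∅, g I.card
        = ∑ I ∈ (univ : Finset (Fin n)).powerset, g I.card - g (∅ : Finset (Fin n)).card := by
      rw [Finset.sum_erase_eq_sub (hp _)]
    have hg0 : g (∅ : Finset (Fin n)).card = B / ((n : ℝ) - 1) := by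
      simp [hg]
    have hgn : g (univ : Finset (Fin n)).card = B / ((n : ℝ) - 1) := by
      simp [hg, card_univ, Fintype.card_fin, Nat.choose_self]
    have hne : ((n : ℝ) - 1) ≠ 0 := by linarith
    calc ∑ I ∈ A, B / (((n : ℝ) - 1) * (n.choose I.card : ℝ)) = ∑ I ∈ A, g I.card := rfl
      _ = ((n : ℝ) + 1) * (B / ((n : ℝ) - 1)) - B / ((n : ℝ) - 1) - B / ((n : ℝ) - 1) := by
          rw [h1, h2, hpow, hg0, hgn]
      _ = B := by field_simp; ring
  -- combine
  have hmain : B ≤ 2 * ∑ I ∈ A, f I := by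
    calc B = ∑ I ∈ A, B / (((n : ℝ) - 1) * (n.choose I.card : ℝ)) := hsumA.symm
      _ ≤ ∑ I ∈ A, (f I + f Iᶜ) := Finset.sum_le_sum hpoint
      _ = ∑ I ∈ A, f I + ∑ I ∈ A, f Iᶜ := Finset.sum_add_distrib
      _ = 2 * ∑ I ∈ A, f I := by rw [hcomplsum]; ring
  have hfu0 : 0 ≤ f univ := hfnn _
  rw [hPsplit]
  linarith
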